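/- The set of quadratic binomials {x_{ij}x_{kl} − x_{ik}x_{jl}, x_{il}x_{jk} − x_{ik}x_{jl} : 1 ≤ i < j < k < l ≤ n} generates the toric ideal Iₙ = ker φₙ of the second hypersimplex. -/

import Mathlib

open MvPolynomial

/-- Index set for the variables `x_{ij}`, `1 ≤ i < j ≤ n`. -/
def VarIdx (n : ℕ) := {p : Fin n × Fin n // p.1 < p.2}

/-- The map `φₙ : ℂ[x_{ij}] → ℂ[t₁,…,tₙ]`, `x_{ij} ↦ t_i t_j`. -/
noncomputable def phi (n : ℕ) :
    MvPolynomial (VarIdx n) ℂ →+* MvPolynomial (Fin n) ℂ :=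
  (aeval fun p : VarIdx n => X p.1.1 * X p.1.2 : _ →ₐ[ℂ] _).toRingHom

/-- The quadratic binomials replacing a noncrossing pair of chords by a crossing pair. -/
def quadBinomials (n : ℕ) : Set (MvPolynomial (VarIdx n) ℂ) :=
  {f | ∃ (i j k l : Fin n) (hij : i < j) (hjk : j < k) (hkl : k < l),
    (f = X ⟨(i, j), hij⟩ * X ⟨(k, l), hkl⟩ -
         X ⟨(i, k), hij.trans hjk⟩ * X ⟨(j, l), hjk.trans hkl⟩ ∨
     f = X ⟨(i, l), (hij.trans hjk).trans hkl⟩ * X ⟨(j, k), hjk⟩ -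
         X ⟨(i, k), hij.trans hjk⟩ * X ⟨(j, l), hjk.trans hkl⟩)}

namespace SHT
open Finsupp
variable {n : ℕ}

instance : DecidableEq (VarIdx n) :=
  inferInstanceAs (DecidableEq {p : Fin n × Fin n // p.1 < p.2})

/-- number of endpoints of edge `f` equal to `v` (0 or 1 since loopless). -/
def cnt (f : VarIdx n) (v : Fin n) : ℕ :=
  (if f.1.1 = v then 1 else 0) + (if f.1.2 = v then 1 else 0)

lemma cnt_le_one (f : VarIdx n) (v : Fin n) : cnt f v ≤ 1 := by
  have hlt := f.2
  unfold cnt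
  split_ifs with h1 h2 <;> omega

noncomputable def D (a : VarIdx n →₀ ℕ) : Fin n →₀ ℕ :=
  a.sum fun f m => m • (Finsupp.single f.1.1 1 + Finsupp.single f.1.2 1)

lemma D_zero : D (0 : VarIdx n →₀ ℕ) = 0 := Finsupp.sum_zero_index

lemma D_add (u v : VarIdx n →₀ ℕ) : D (u + v) = D u + D v :=
  Finsupp.sum_add_index (by intro a _; simp) (fun a _ b₁ b₂ => add_smul b₁ b₂ _)

lemma D_single (f : VarIdx n) (m : ℕ) :
    D (Finsupp.single f m) = m • (Finsupp.single f.1.1 1 + Finsupp.single f.1.2 1) :=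
  Finsupp.sum_single_index (by simp)

lemma D_apply (a : VarIdx n →₀ ℕ) (v : Fin n) :
    D a v = ∑ f ∈ a.support, a f * cnt f v := by
  unfold D
  rw [Finsupp.sum_apply]
  refine Finset.sum_congr rfl fun f _ => ?_
  simp [cnt, Finsupp.single_apply, mul_add]

def degsum (a : VarIdx n →₀ ℕ) : ℕ := a.sum fun _ m => m

lemma degsum_zero : degsum (0 : VarIdx n →₀ ℕ) = 0 := Finsupp.sum_zero_index

lemma degsum_add (u v : VarIdx n →₀ ℕ) : degsum (u + v) = degsum u + degsum v :=
  Finsupp.sum_add_index (by simp) (fun _ _ _ _ => rfl)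

lemma degsum_single (f : VarIdx n) (m : ℕ) : degsum (Finsupp.single f m) = m :=
  Finsupp.sum_single_index rfl

lemma le_degsum (a : VarIdx n →₀ ℕ) (f : VarIdx n) : a f ≤ degsum a := by
  by_cases hf : f ∈ a.support
  · exact Finset.single_le_sum (f := fun i => a i) (fun _ _ => Nat.zero_le _) hf
  · simp [Finsupp.notMem_support_iff.mp hf]

lemma degsum_eq_zero_iff (a : VarIdx n →₀ ℕ) : degsum a = 0 ↔ a = 0 := by
  constructor
  · intro h
    ext f
    have := le_degsum a f
    simp; omega
  · rintro rfl; exact degsum_zero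

lemma sum_D (a : VarIdx n →₀ ℕ) : (D a).sum (fun _ m => m) = 2 * degsum a := by
  induction a using Finsupp.induction with
  | zero => simp [D_zero, degsum_zero]
  | single_add f m b hfb hm ih =>
    rw [D_add, degsum_add, Finsupp.sum_add_index (by simp) (fun _ _ _ _ => rfl), ih,
      D_single, degsum_single]
    have hne : f.1.1 ≠ f.1.2 := ne_of_lt f.2
    rw [smul_add, Finsupp.smul_single, Finsupp.smul_single,
      Finsupp.sum_add_index (by simp) (fun _ _ _ _ => rfl),
      Finsupp.sum_single_index rfl, Finsupp.sum_single_index rfl]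
    ring



lemma mem_of_eq {R : Type*} [CommRing R] {I : Ideal R} {a b : R} (h : a = b) (hb : b ∈ I) :
    a ∈ I := h ▸ hb

def E (i j : Fin n) (h : i ≠ j) : VarIdx n :=
  if h' : i < j then ⟨(i, j), h'⟩ else ⟨(j, i), by exact lt_of_le_of_ne (le_of_not_gt h') h.symm⟩

lemma E_lt {i j : Fin n} (h : i ≠ j) (h' : i < j) : E i j h = ⟨(i, j), h'⟩ := dif_pos h'

lemma E_gt {i j : Fin n} (h : i ≠ j) (h' : j < i) : E i j h = ⟨(j, i), h'⟩ := by
  unfold E VarIdx; rw [dif_neg (by omega)]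

lemma D_single_E {i j : Fin n} (h : i ≠ j) :
    D (Finsupp.single (E i j h) 1) = Finsupp.single i 1 + Finsupp.single j 1 := by
  rcases lt_or_gt_of_ne h with h' | h'
  · rw [D_single, E_lt h h']; simp <;> abel
  · rw [D_single, E_gt h h']; simp <;> abel

lemma mdiff (i j k l : Fin n) (h1 : i < j) (h2 : j < k) (h3 : k < l)
    (u v : MvPolynomial (VarIdx n) ℂ)
    (hu : u = X ⟨(i, j), h1⟩ * X ⟨(k, l), h3⟩ ∨
          u = X ⟨(i, k), h1.trans h2⟩ * X ⟨(j, l), h2.trans h3⟩ ∨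
          u = X ⟨(i, l), (h1.trans h2).trans h3⟩ * X ⟨(j, k), h2⟩)
    (hv : v = X ⟨(i, j), h1⟩ * X ⟨(k, l), h3⟩ ∨
          v = X ⟨(i, k), h1.trans h2⟩ * X ⟨(j, l), h2.trans h3⟩ ∨
          v = X ⟨(i, l), (h1.trans h2).trans h3⟩ * X ⟨(j, k), h2⟩) :
    u - v ∈ Ideal.span (quadBinomials n) := by
  have g1 : (X ⟨(i, j), h1⟩ * X ⟨(k, l), h3⟩ -
      X ⟨(i, k), h1.trans h2⟩ * X ⟨(j, l), h2.trans h3⟩ : MvPolynomial (VarIdx n) ℂ)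
      ∈ Ideal.span (quadBinomials n) :=
    Ideal.subset_span ⟨i, j, k, l, h1, h2, h3, Or.inl rfl⟩
  have g2 : (X ⟨(i, l), (h1.trans h2).trans h3⟩ * X ⟨(j, k), h2⟩ -
      X ⟨(i, k), h1.trans h2⟩ * X ⟨(j, l), h2.trans h3⟩ : MvPolynomial (VarIdx n) ℂ)
      ∈ Ideal.span (quadBinomials n) :=
    Ideal.subset_span ⟨i, j, k, l, h1, h2, h3, Or.inr rfl⟩
  rcases hu with rfl | rfl | rfl <;> rcases hv with rfl | rfl | rfl
  · exact mem_of_eq (by ring) (Ideal.zero_mem _)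
  · exact g1
  · exact mem_of_eq (by ring) (Submodule.sub_mem _ g1 g2)
  · exact mem_of_eq (by ring) (Submodule.neg_mem _ g1)
  · exact mem_of_eq (by ring) (Ideal.zero_mem _)
  · exact mem_of_eq (by ring) (Submodule.neg_mem _ g2)
  · exact mem_of_eq (by ring) (Submodule.sub_mem _ g2 g1)
  · exact g2
  · exact mem_of_eq (by ring) (Ideal.zero_mem _)
lemma quad_mem (p q r s : Fin n) (hpq : p ≠ q) (hrs : r ≠ s) (hpr : p ≠ r)
    (hqs : q ≠ s) (hps : p ≠ s) (hqr : q ≠ r) :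
    (X (E p q hpq) * X (E r s hrs) - X (E p r hpr) * X (E q s hqs) :
      MvPolynomial (VarIdx n) ℂ) ∈ Ideal.span (quadBinomials n) := by
  rcases hpq.lt_or_gt with h1 | h1
  · 
    rcases hrs.lt_or_gt with h2 | h2
    · 
      rcases hpr.lt_or_gt with h3 | h3
      · 
        rcases hqs.lt_or_gt with h4 | h4
        · 
          rcases hps.lt_or_gt with h5 | h5
          · 
            rcases hqr.lt_or_gt with h6 | h6
            · 
              rw [E_lt hpq h1, E_lt hrs h2, E_lt hpr h3, E_lt hqs h4]
              exact mdiff p q r s h1 h6 h2 _ _ (Or.inl (by ring)) (Or.inr (Or.inl (by ring)))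
            · 
              rw [E_lt hpq h1, E_lt hrs h2, E_lt hpr h3, E_lt hqs h4]
              exact mdiff p r q s h3 h6 h4 _ _ (Or.inr (Or.inl (by ring))) (Or.inl (by ring))
          · 
            rcases hqr.lt_or_gt with h6 | h6
            · 
              omega
            · 
              omega
        · 
          rcases hps.lt_or_gt with h5 | h5
          · 
            rcases hqr.lt_or_gt with h6 | h6
            · 
              omega
            · 
              rw [E_lt hpq h1, E_lt hrs h2, E_lt hpr h3, E_gt hqs h4]
              exact mdiff p r s q h3 h2 h4 _ _ (Or.inr (Or.inr (by ring))) (Or.inl (by ring))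
          · 
            rcases hqr.lt_or_gt with h6 | h6
            · 
              omega
            · 
              omega
      · 
        rcases hqs.lt_or_gt with h4 | h4
        · 
          rcases hps.lt_or_gt with h5 | h5
          · 
            rcases hqr.lt_or_gt with h6 | h6
            · 
              omega
            · 
              rw [E_lt hpq h1, E_lt hrs h2, E_gt hpr h3, E_lt hqs h4]
              exact mdiff r p q s h3 h1 h4 _ _ (Or.inr (Or.inr (by ring))) (Or.inl (by ring))
          · 
            rcases hqr.lt_or_gt with h6 | h6
            · 
              omega
            · 
              omega
        · 
          rcases hps.lt_or_gt with h5 | h5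
          · 
            rcases hqr.lt_or_gt with h6 | h6
            · 
              omega
            · 
              rw [E_lt hpq h1, E_lt hrs h2, E_gt hpr h3, E_gt hqs h4]
              exact mdiff r p s q h3 h5 h4 _ _ (Or.inr (Or.inl (by ring))) (Or.inl (by ring))
          · 
            rcases hqr.lt_or_gt with h6 | h6
            · 
              omega
            · 
              rw [E_lt hpq h1, E_lt hrs h2, E_gt hpr h3, E_gt hqs h4]
              exact mdiff r s p q h2 h5 h1 _ _ (Or.inl (by ring)) (Or.inr (Or.inl (by ring)))
    · 
      rcases hpr.lt_or_gt with h3 | h3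
      · 
        rcases hqs.lt_or_gt with h4 | h4
        · 
          rcases hps.lt_or_gt with h5 | h5
          · 
            rcases hqr.lt_or_gt with h6 | h6
            · 
              rw [E_lt hpq h1, E_gt hrs h2, E_lt hpr h3, E_lt hqs h4]
              exact mdiff p q s r h1 h4 h2 _ _ (Or.inl (by ring)) (Or.inr (Or.inr (by ring)))
            · 
              omega
          · 
            rcases hqr.lt_or_gt with h6 | h6
            · 
              omega
            · 
              omega
        · 
          rcases hps.lt_or_gt with h5 | h5
          · 
            rcases hqr.lt_or_gt with h6 | h6
            · 
              rw [E_lt hpq h1, E_gt hrs h2, E_lt hpr h3, E_gt hqs h4]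
              exact mdiff p s q r h5 h4 h6 _ _ (Or.inr (Or.inl (by ring))) (Or.inr (Or.inr (by ring)))
            · 
              rw [E_lt hpq h1, E_gt hrs h2, E_lt hpr h3, E_gt hqs h4]
              exact mdiff p s r q h5 h2 h6 _ _ (Or.inr (Or.inr (by ring))) (Or.inr (Or.inl (by ring)))
          · 
            rcases hqr.lt_or_gt with h6 | h6
            · 
              rw [E_lt hpq h1, E_gt hrs h2, E_lt hpr h3, E_gt hqs h4]
              exact mdiff s p q r h5 h1 h6 _ _ (Or.inr (Or.inr (by ring))) (Or.inr (Or.inl (by ring)))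
            · 
              rw [E_lt hpq h1, E_gt hrs h2, E_lt hpr h3, E_gt hqs h4]
              exact mdiff s p r q h5 h3 h6 _ _ (Or.inr (Or.inl (by ring))) (Or.inr (Or.inr (by ring)))
      · 
        rcases hqs.lt_or_gt with h4 | h4
        · 
          rcases hps.lt_or_gt with h5 | h5
          · 
            rcases hqr.lt_or_gt with h6 | h6
            · 
              omega
            · 
              omega
          · 
            rcases hqr.lt_or_gt with h6 | h6
            · 
              omega
            · 
              omega
        · 
          rcases hps.lt_or_gt with h5 | h5
          · 
            rcases hqr.lt_or_gt with h6 | h6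
            · 
              omega
            · 
              omega
          · 
            rcases hqr.lt_or_gt with h6 | h6
            · 
              omega
            · 
              rw [E_lt hpq h1, E_gt hrs h2, E_gt hpr h3, E_gt hqs h4]
              exact mdiff s r p q h2 h3 h1 _ _ (Or.inl (by ring)) (Or.inr (Or.inr (by ring)))
  · 
    rcases hrs.lt_or_gt with h2 | h2
    · 
      rcases hpr.lt_or_gt with h3 | h3
      · 
        rcases hqs.lt_or_gt with h4 | h4
        · 
          rcases hps.lt_or_gt with h5 | h5
          · 
            rcases hqr.lt_or_gt with h6 | h6
            · 
              rw [E_gt hpq h1, E_lt hrs h2, E_lt hpr h3, E_lt hqs h4]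
              exact mdiff q p r s h1 h3 h2 _ _ (Or.inl (by ring)) (Or.inr (Or.inr (by ring)))
            · 
              omega
          · 
            rcases hqr.lt_or_gt with h6 | h6
            · 
              omega
            · 
              omega
        · 
          rcases hps.lt_or_gt with h5 | h5
          · 
            rcases hqr.lt_or_gt with h6 | h6
            · 
              omega
            · 
              omega
          · 
            rcases hqr.lt_or_gt with h6 | h6
            · 
              omega
            · 
              omega
      · 
        rcases hqs.lt_or_gt with h4 | h4
        · 
          rcases hps.lt_or_gt with h5 | h5
          · 
            rcases hqr.lt_or_gt with h6 | h6
            · 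
              rw [E_gt hpq h1, E_lt hrs h2, E_gt hpr h3, E_lt hqs h4]
              exact mdiff q r p s h6 h3 h5 _ _ (Or.inr (Or.inl (by ring))) (Or.inr (Or.inr (by ring)))
            · 
              rw [E_gt hpq h1, E_lt hrs h2, E_gt hpr h3, E_lt hqs h4]
              exact mdiff r q p s h6 h1 h5 _ _ (Or.inr (Or.inr (by ring))) (Or.inr (Or.inl (by ring)))
          · 
            rcases hqr.lt_or_gt with h6 | h6
            · 
              rw [E_gt hpq h1, E_lt hrs h2, E_gt hpr h3, E_lt hqs h4]
              exact mdiff q r s p h6 h2 h5 _ _ (Or.inr (Or.inr (by ring))) (Or.inr (Or.inl (by ring)))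
            · 
              rw [E_gt hpq h1, E_lt hrs h2, E_gt hpr h3, E_lt hqs h4]
              exact mdiff r q s p h6 h4 h5 _ _ (Or.inr (Or.inl (by ring))) (Or.inr (Or.inr (by ring)))
        · 
          rcases hps.lt_or_gt with h5 | h5
          · 
            rcases hqr.lt_or_gt with h6 | h6
            · 
              omega
            · 
              omega
          · 
            rcases hqr.lt_or_gt with h6 | h6
            · 
              omega
            · 
              rw [E_gt hpq h1, E_lt hrs h2, E_gt hpr h3, E_gt hqs h4]
              exact mdiff r s q p h2 h4 h1 _ _ (Or.inl (by ring)) (Or.inr (Or.inr (by ring)))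
    · 
      rcases hpr.lt_or_gt with h3 | h3
      · 
        rcases hqs.lt_or_gt with h4 | h4
        · 
          rcases hps.lt_or_gt with h5 | h5
          · 
            rcases hqr.lt_or_gt with h6 | h6
            · 
              rw [E_gt hpq h1, E_gt hrs h2, E_lt hpr h3, E_lt hqs h4]
              exact mdiff q p s r h1 h5 h2 _ _ (Or.inl (by ring)) (Or.inr (Or.inl (by ring)))
            · 
              omega
          · 
            rcases hqr.lt_or_gt with h6 | h6
            · 
              rw [E_gt hpq h1, E_gt hrs h2, E_lt hpr h3, E_lt hqs h4]
              exact mdiff q s p r h4 h5 h3 _ _ (Or.inr (Or.inl (by ring))) (Or.inl (by ring))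
            · 
              omega
        · 
          rcases hps.lt_or_gt with h5 | h5
          · 
            rcases hqr.lt_or_gt with h6 | h6
            · 
              omega
            · 
              omega
          · 
            rcases hqr.lt_or_gt with h6 | h6
            · 
              rw [E_gt hpq h1, E_gt hrs h2, E_lt hpr h3, E_gt hqs h4]
              exact mdiff s q p r h4 h1 h3 _ _ (Or.inr (Or.inr (by ring))) (Or.inl (by ring))
            · 
              omega
      · 
        rcases hqs.lt_or_gt with h4 | h4
        · 
          rcases hps.lt_or_gt with h5 | h5
          · 
            rcases hqr.lt_or_gt with h6 | h6
            · 
              omega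
            · 
              omega
          · 
            rcases hqr.lt_or_gt with h6 | h6
            · 
              rw [E_gt hpq h1, E_gt hrs h2, E_gt hpr h3, E_lt hqs h4]
              exact mdiff q s r p h4 h2 h3 _ _ (Or.inr (Or.inr (by ring))) (Or.inl (by ring))
            · 
              omega
        · 
          rcases hps.lt_or_gt with h5 | h5
          · 
            rcases hqr.lt_or_gt with h6 | h6
            · 
              omega
            · 
              omega
          · 
            rcases hqr.lt_or_gt with h6 | h6
            · 
              rw [E_gt hpq h1, E_gt hrs h2, E_gt hpr h3, E_gt hqs h4]
              exact mdiff s q r p h4 h6 h3 _ _ (Or.inr (Or.inl (by ring))) (Or.inl (by ring))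
            · 
              rw [E_gt hpq h1, E_gt hrs h2, E_gt hpr h3, E_gt hqs h4]
              exact mdiff s r q p h2 h6 h1 _ _ (Or.inl (by ring)) (Or.inr (Or.inl (by ring)))


lemma mono_addX (u : VarIdx n →₀ ℕ) (g : VarIdx n) :
    monomial (u + Finsupp.single g 1) (1:ℂ) = monomial u 1 * X g := by
  have : (X g : MvPolynomial (VarIdx n) ℂ) = monomial (Finsupp.single g 1) 1 := rfl
  rw [this, monomial_mul, one_mul]

lemma mk_eq_mk {p q : Fin n × Fin n} {h1 : p.1 < p.2} {h2 : q.1 < q.2} :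
    (⟨p, h1⟩ : VarIdx n) = ⟨q, h2⟩ ↔ p = q := by
  constructor
  · intro h
    exact congrArg Subtype.val h
  · intro h
    cases h
    rfl

lemma E_eq_iff {a b c d : Fin n} (hab : a ≠ b) (hcd : c ≠ d) :
    E a b hab = E c d hcd ↔ (a = c ∧ b = d) ∨ (a = d ∧ b = c) := by
  unfold E VarIdx
  split_ifs with h1 h2 h2 <;> rw [mk_eq_mk, Prod.mk.injEq] <;>
    constructor <;> (intro h; omega)

lemma E_endpoint {a b : Fin n} (hab : a ≠ b) :
    ((E a b hab).1.1 = a ∨ (E a b hab).1.2 = a) ∧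
    ((E a b hab).1.1 = b ∨ (E a b hab).1.2 = b) := by
  unfold E VarIdx; split_ifs <;> simp

lemma cnt_pos {e : VarIdx n} {v : Fin n} (hv : e.1.1 = v ∨ e.1.2 = v) : 1 ≤ cnt e v := by
  unfold cnt; rcases hv with h | h <;> simp [h]

lemma D_pos_of {a : VarIdx n →₀ ℕ} {e : VarIdx n} (he : a e ≠ 0) {v : Fin n}
    (hv : e.1.1 = v ∨ e.1.2 = v) : D a v ≠ 0 := by
  have hmem : e ∈ a.support := Finsupp.mem_support_iff.mpr he
  have h1 : a e * cnt e v ≤ D a v := by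
    rw [D_apply]
    exact Finset.single_le_sum (f := fun f => a f * cnt f v) (fun _ _ => Nat.zero_le _) hmem
  have := cnt_pos hv
  have : 1 ≤ a e * cnt e v := Nat.one_le_iff_ne_zero.mpr (by positivity)
  omega

lemma exists_incident (b : VarIdx n →₀ ℕ) (v : Fin n) (h : D b v ≠ 0) :
    ∃ f, b f ≠ 0 ∧ (f.1.1 = v ∨ f.1.2 = v) := by
  by_contra hc
  push_neg at hc
  apply h
  rw [D_apply]
  apply Finset.sum_eq_zero
  intro f hf
  have h2 := hc f (Finsupp.mem_support_iff.mp hf)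
  simp [cnt, h2.1, h2.2]

lemma incident_other {f : VarIdx n} {v : Fin n} (hv : f.1.1 = v ∨ f.1.2 = v) :
    ∃ (w : Fin n) (hw : v ≠ w), f = E v w hw := by
  obtain ⟨⟨x, y⟩, hxy⟩ := f
  simp only at hv
  rcases hv with h | h
  · subst h
    exact ⟨y, ne_of_lt hxy, (E_lt _ hxy).symm⟩
  · subst h
    exact ⟨x, (ne_of_lt hxy).symm, (E_gt _ hxy).symm⟩

lemma incident_le {a : VarIdx n →₀ ℕ} {v : Fin n} {e : VarIdx n}
    (h1 : e.1.1 ≠ v) (h2 : e.1.2 ≠ v) : D a v + a e ≤ degsum a := by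
  have hcnt : cnt e v = 0 := by simp [cnt, h1, h2]
  have hae : a e = ∑ f ∈ a.support, if f = e then a f else 0 := by
    rw [Finset.sum_ite_eq' a.support e (fun f => a f)]
    split_ifs with h
    · rfl
    · exact Finsupp.notMem_support_iff.mp h
  have hds : degsum a = ∑ f ∈ a.support, a f := rfl
  rw [D_apply, hae, hds, ← Finset.sum_add_distrib]
  apply Finset.sum_le_sum
  intro f _
  split_ifs with h
  · subst h; rw [hcnt]; omega
  · have := cnt_le_one f v
    nlinarith

lemma star_deg {b : VarIdx n →₀ ℕ} {v : Fin n}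
    (hstar : ∀ f ∈ b.support, f.1.1 = v ∨ f.1.2 = v) : D b v = degsum b := by
  have hds : degsum b = ∑ f ∈ b.support, b f := rfl
  rw [D_apply, hds]
  apply Finset.sum_congr rfl
  intro f hf
  have h1 := hstar f hf
  have hlt := f.2
  have : cnt f v = 1 := by
    unfold cnt
    rcases h1 with h | h <;> rw [h] <;> split_ifs with hh <;> omega
  rw [this, mul_one]

lemma swap_step (b : VarIdx n →₀ ℕ) (e1 e2 f1 f2 : VarIdx n)
    (h1 : b e1 ≠ 0) (h2 : b e2 ≠ 0) (hne : e1 ≠ e2)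
    (hg : (X e1 * X e2 - X f1 * X f2 : MvPolynomial (VarIdx n) ℂ) ∈
      Ideal.span (quadBinomials n))
    (hDs : D (Finsupp.single e1 1) + D (Finsupp.single e2 1)
        = D (Finsupp.single f1 1) + D (Finsupp.single f2 1)) :
    (monomial b 1 - monomial (b - Finsupp.single e1 1 - Finsupp.single e2 1
        + Finsupp.single f1 1 + Finsupp.single f2 1) (1:ℂ)
      ∈ Ideal.span (quadBinomials n)) ∧
    D (b - Finsupp.single e1 1 - Finsupp.single e2 1
        + Finsupp.single f1 1 + Finsupp.single f2 1) = D b := by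
  set c := b - Finsupp.single e1 1 - Finsupp.single e2 1 with hc
  have hb1 : 1 ≤ b e1 := Nat.one_le_iff_ne_zero.mpr h1
  have hb2 : 1 ≤ b e2 := Nat.one_le_iff_ne_zero.mpr h2
  have hb : b = c + Finsupp.single e1 1 + Finsupp.single e2 1 := by
    ext x
    rw [hc]
    simp only [Finsupp.add_apply, Finsupp.tsub_apply]
    rcases eq_or_ne x e1 with rfl | hx1
    · simp [Finsupp.single_apply, hne, (Ne.symm hne)]
      omega
    · rcases eq_or_ne x e2 with rfl | hx2
      · simp [Finsupp.single_apply, hne, Ne.symm hx1]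
        omega
      · simp [Finsupp.single_apply, Ne.symm hx1, Ne.symm hx2]
  constructor
  · have key : monomial b (1:ℂ) - monomial (c + Finsupp.single f1 1 + Finsupp.single f2 1) 1
        = monomial c 1 * (X e1 * X e2 - X f1 * X f2) := by
      nth_rewrite 1 [hb]
      rw [mono_addX, mono_addX, mono_addX, mono_addX]
      ring
    exact mem_of_eq key (Ideal.mul_mem_left _ _ hg)
  · rw [hb, D_add, D_add, D_add, D_add, add_assoc, add_assoc, hDs]

lemma move (a b : VarIdx n →₀ ℕ) (hD : D a = D b) (e : VarIdx n) (he : a e ≠ 0) :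
    ∃ b', b' e ≠ 0 ∧ D b' = D b ∧
      (monomial b 1 - monomial b' (1:ℂ)) ∈ Ideal.span (quadBinomials n) := by
  by_cases hbe : b e = 0
  swap
  · exact ⟨b, hbe, rfl, by rw [sub_self]; exact Ideal.zero_mem _⟩
  obtain ⟨⟨i, j⟩, hij⟩ := e

  have hije : i ≠ j := ne_of_lt hij
  have hEije : E i j hije = ⟨(i, j), hij⟩ := E_lt hije hij
  -- both endpoints of e have positive degree in b
  have hDi : D b i ≠ 0 := hD ▸ D_pos_of he (Or.inl rfl)
  have hDj : D b j ≠ 0 := hD ▸ D_pos_of he (Or.inr rfl)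
  -- an edge of b at i, and one at j
  obtain ⟨f, hf, hfi⟩ := exists_incident b i hDi
  obtain ⟨g, hg, hgj⟩ := exists_incident b j hDj
  obtain ⟨k₁, hik₁, rfl⟩ := incident_other hfi
  obtain ⟨l₁, hjl₁, rfl⟩ := incident_other hgj
  have hk₁j : k₁ ≠ j := by
    rintro rfl
    rw [hEije] at hf
    exact hf hbe
  have hl₁i : l₁ ≠ i := by
    intro heq
    apply hg
    have : E j l₁ hjl₁ = ⟨(i, j), hij⟩ := by subst heq; exact E_gt hjl₁ hij
    rw [this]
    exact hbe
  by_cases hgood : ∃ (k l : Fin n) (hik : i ≠ k) (hjl : j ≠ l),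
      k ≠ j ∧ l ≠ i ∧ k ≠ l ∧ b (E i k hik) ≠ 0 ∧ b (E j l hjl) ≠ 0
  · obtain ⟨k, l, hik, hjl, hkj, hli, hkl, hbik, hbjl⟩ := hgood
    have hil : i ≠ l := Ne.symm hli
    have hijne : i ≠ j := hije
    have hkl' : k ≠ l := hkl
    have hq := quad_mem i k j l hik hjl hijne hkl' hil hkj
    have hne12 : E i k hik ≠ E j l hjl := by
      rw [Ne, E_eq_iff]
      omega
    have hDs : D (Finsupp.single (E i k hik) 1) + D (Finsupp.single (E j l hjl) 1)
        = D (Finsupp.single (E i j hije) 1) + D (Finsupp.single (E k l hkl) 1) := by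
      rw [D_single_E, D_single_E, D_single_E, D_single_E]
      abel
    obtain ⟨hmem, hDb'⟩ := swap_step b (E i k hik) (E j l hjl) (E i j hije) (E k l hkl)
      hbik hbjl hne12 hq hDs
    refine ⟨_, ?_, hDb', hmem⟩
    rw [← hEije]
    simp only [Finsupp.add_apply, Finsupp.single_eq_same]
    omega
  · -- all edges at i and at j share a single common endpoint k
    push_neg at hgood
    have hcommon : ∀ (k l : Fin n) (hik : i ≠ k) (hjl : j ≠ l), k ≠ j → l ≠ i →
        b (E i k hik) ≠ 0 → b (E j l hjl) ≠ 0 → k = l := by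
      intro k l hik hjl hkj hli hb1 hb2
      by_contra hkl
      exact hb2 (hgood k l hik hjl hkj hli hkl hb1)
    have hk₁l₁ : k₁ = l₁ := hcommon k₁ l₁ hik₁ hjl₁ hk₁j hl₁i hf hg
    subst hk₁l₁
    set k := k₁ with hk
    have hki : k ≠ i := Ne.symm hik₁
    have hkj' : k ≠ j := hk₁j
    -- every edge of b at i is E i k, every edge at j is E j k
    have hedge_i : ∀ f', b f' ≠ 0 → (f'.1.1 = i ∨ f'.1.2 = i) → f' = E i k hik₁ := by
      intro f' hbf' hinc
      obtain ⟨w, hiw, rfl⟩ := incident_other hinc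
      rcases eq_or_ne w j with hwj' | hwj
      · have : E i w hiw = ⟨(i, j), hij⟩ := by subst hwj'; exact E_lt hiw hij
        rw [this] at hbf'; exact absurd hbe hbf'
      · have := hcommon w k hiw hjl₁ hwj hl₁i hbf' hg
        subst this; rfl
    have hedge_j : ∀ f', b f' ≠ 0 → (f'.1.1 = j ∨ f'.1.2 = j) → f' = E j k hjl₁ := by
      intro f' hbf' hinc
      obtain ⟨w, hjw, rfl⟩ := incident_other hinc
      rcases eq_or_ne w i with hwi' | hwi
      · have : E j w hjw = ⟨(i, j), hij⟩ := by subst hwi'; exact E_gt hjw hij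
        rw [this] at hbf'; exact absurd hbe hbf'
      · have := (hcommon k w hik₁ hjw hkj' hwi hf hbf').symm
        subst this; rfl
    -- there is an edge of b avoiding k (hence avoiding i, j, k)
    have hstar : ¬(∀ f' ∈ b.support, f'.1.1 = k ∨ f'.1.2 = k) := by
      intro hstar
      have h1 : D b k = degsum b := star_deg hstar
      have h2 : D a k + a ⟨(i, j), hij⟩ ≤ degsum a := by
        refine incident_le ?_ ?_ <;> simp [Ne.symm hki, Ne.symm hkj']
      have h3 : degsum a = degsum b := by
        have s1 := sum_D a
        have s2 := sum_D b
        rw [hD] at s1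
        omega
      have h4 : D a k = D b k := by rw [hD]
      omega
    push_neg at hstar
    obtain ⟨h', hh'sup, hh'1, hh'2⟩ := hstar
    have hbh' : b h' ≠ 0 := Finsupp.mem_support_iff.mp hh'sup
    have hh'i : ¬(h'.1.1 = i ∨ h'.1.2 = i) := by
      intro hcase
      have := hedge_i h' hbh' hcase
      rcases (E_endpoint hik₁).2 with hE | hE <;> rw [this] at hh'1 hh'2
      · exact hh'1 hE
      · exact hh'2 hE
    have hh'j : ¬(h'.1.1 = j ∨ h'.1.2 = j) := by
      intro hcase
      have := hedge_j h' hbh' hcase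
      rcases (E_endpoint hjl₁).2 with hE | hE <;> rw [this] at hh'1 hh'2
      · exact hh'1 hE
      · exact hh'2 hE
    push_neg at hh'i hh'j
    obtain ⟨⟨p, q⟩, hpq⟩ := h'
    simp only at hh'1 hh'2 hh'i hh'j
    have hpqe : p ≠ q := ne_of_lt hpq
    have hEpq : E p q hpqe = ⟨(p, q), hpq⟩ := E_lt hpqe hpq
    -- first swap: E i k, E p q ↦ E i p, E k q
    have hip : i ≠ p := Ne.symm hh'i.1
    have hiq : i ≠ q := Ne.symm hh'i.2
    have hjp : j ≠ p := Ne.symm hh'j.1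
    have hjq : j ≠ q := Ne.symm hh'j.2
    have hkp : k ≠ p := Ne.symm hh'1
    have hkq : k ≠ q := Ne.symm hh'2
    have hq1 := quad_mem i k p q hik₁ hpqe hip hkq hiq hkp
    have hne1 : E i k hik₁ ≠ E p q hpqe := by
      rw [Ne, E_eq_iff]; omega
    have hDs1 : D (Finsupp.single (E i k hik₁) 1) + D (Finsupp.single (E p q hpqe) 1)
        = D (Finsupp.single (E i p hip) 1) + D (Finsupp.single (E k q hkq) 1) := by
      rw [D_single_E, D_single_E, D_single_E, D_single_E]; abel
    have hbpq : b (E p q hpqe) ≠ 0 := by rw [hEpq]; exact hbh'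
    obtain ⟨hmem1, hDb1⟩ := swap_step b (E i k hik₁) (E p q hpqe) (E i p hip) (E k q hkq)
      hf hbpq hne1 hq1 hDs1
    set b1 := b - Finsupp.single (E i k hik₁) 1 - Finsupp.single (E p q hpqe) 1
        + Finsupp.single (E i p hip) 1 + Finsupp.single (E k q hkq) 1 with hb1def
    have hb1ip : b1 (E i p hip) ≠ 0 := by
      rw [hb1def]
      simp only [Finsupp.add_apply, Finsupp.single_eq_same]
      omega
    have hb1jk : b1 (E j k hjl₁) ≠ 0 := by
      have hne_a : E i k hik₁ ≠ E j k hjl₁ := by rw [Ne, E_eq_iff]; omega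
      have hne_b : E p q hpqe ≠ E j k hjl₁ := by rw [Ne, E_eq_iff]; omega
      have hne_c : E i p hip ≠ E j k hjl₁ := by rw [Ne, E_eq_iff]; omega
      have hne_d : E k q hkq ≠ E j k hjl₁ := by rw [Ne, E_eq_iff]; omega
      rw [hb1def]
      simp only [Finsupp.add_apply, Finsupp.tsub_apply,
        Finsupp.single_apply, if_neg hne_a, if_neg hne_b, if_neg hne_c, if_neg hne_d]
      simpa using hg
    -- second swap: E i p, E j k ↦ E i j, E p k
    have hpk : p ≠ k := hh'1
    have hpj : p ≠ j := hh'j.1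
    have hq2 := quad_mem i p j k hip hjl₁ hije hpk hki.symm hpj
    have hne2 : E i p hip ≠ E j k hjl₁ := by rw [Ne, E_eq_iff]; omega
    have hDs2 : D (Finsupp.single (E i p hip) 1) + D (Finsupp.single (E j k hjl₁) 1)
        = D (Finsupp.single (E i j hije) 1) + D (Finsupp.single (E p k hpk) 1) := by
      rw [D_single_E, D_single_E, D_single_E, D_single_E]; abel
    obtain ⟨hmem2, hDb2⟩ := swap_step b1 (E i p hip) (E j k hjl₁) (E i j hije) (E p k hpk)
      hb1ip hb1jk hne2 hq2 hDs2
    set b2 := b1 - Finsupp.single (E i p hip) 1 - Finsupp.single (E j k hjl₁) 1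
        + Finsupp.single (E i j hije) 1 + Finsupp.single (E p k hpk) 1 with hb2def
    refine ⟨b2, ?_, by rw [hDb2, hDb1], ?_⟩
    · rw [hb2def, ← hEije]
      simp only [Finsupp.add_apply, Finsupp.single_eq_same]
      omega
    · exact mem_of_eq (by ring) (Submodule.add_mem _ hmem1 hmem2)

lemma main : ∀ (N : ℕ) (a b : VarIdx n →₀ ℕ), degsum a ≤ N → D a = D b →
    (monomial a 1 - monomial b (1:ℂ) : MvPolynomial (VarIdx n) ℂ)
      ∈ Ideal.span (quadBinomials n) := by
  intro N
  induction N with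
  | zero =>
    intro a b ha hD
    have ha0 : a = 0 := (degsum_eq_zero_iff a).mp (by omega)
    subst ha0
    have hb0 : b = 0 := by
      rw [← degsum_eq_zero_iff]
      have s1 := sum_D (0 : VarIdx n →₀ ℕ)
      have s2 := sum_D b
      rw [hD] at s1
      omega
    subst hb0
    simp
  | succ N ih =>
    intro a b ha hD
    rcases eq_or_ne a 0 with rfl | ha0
    · have hb0 : b = 0 := by
        rw [← degsum_eq_zero_iff]
        have s1 := sum_D (0 : VarIdx n →₀ ℕ)
        have s2 := sum_D b
        rw [hD] at s1
        rw [degsum_zero] at s1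
        omega
      subst hb0
      simp
    · obtain ⟨e, hesup⟩ := Finsupp.support_nonempty_iff.mpr ha0
      have he : a e ≠ 0 := Finsupp.mem_support_iff.mp hesup
      obtain ⟨b', hb'e, hDb', hspan⟩ := move a b hD e he
      set a₀ := a - Finsupp.single e 1 with ha₀
      set b₀ := b' - Finsupp.single e 1 with hb₀
      have haa : a = a₀ + Finsupp.single e 1 := by
        ext x
        rw [ha₀]
        simp only [Finsupp.add_apply, Finsupp.tsub_apply, Finsupp.single_apply]
        split_ifs with h
        · subst h; omega
        · omega
      have hbb : b' = b₀ + Finsupp.single e 1 := by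
        ext x
        rw [hb₀]
        simp only [Finsupp.add_apply, Finsupp.tsub_apply, Finsupp.single_apply]
        split_ifs with h
        · subst h; omega
        · omega
      have hD' : D a = D b' := hD.trans hDb'.symm
      rw [haa, hbb, D_add, D_add] at hD'
      have hD₀ : D a₀ = D b₀ := add_right_cancel hD'
      have hdeg : degsum a₀ ≤ N := by
        have : degsum a = degsum a₀ + 1 := by
          rw [haa, degsum_add, degsum_single]
        omega
      have IH := ih a₀ b₀ hdeg hD₀
      have key : monomial a (1:ℂ) - monomial b 1
          = X e * (monomial a₀ 1 - monomial b₀ 1) - (monomial b 1 - monomial b' 1) := by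
        rw [haa, hbb, mono_addX, mono_addX]
        ring
      exact mem_of_eq key (Submodule.sub_mem _ (Ideal.mul_mem_left _ _ IH) hspan)
lemma phi_apply (p : MvPolynomial (VarIdx n) ℂ) :
    phi n p = aeval (fun q : VarIdx n => X q.1.1 * X q.1.2) p := rfl

lemma phi_X_mk (i j : Fin n) (h : ((i, j) : Fin n × Fin n).1 < ((i, j) : Fin n × Fin n).2) :
    phi n (X (⟨(i, j), h⟩ : VarIdx n)) = X i * X j :=
  aeval_X _ _

lemma phi_monomial (a : VarIdx n →₀ ℕ) (c : ℂ) :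
    phi n (monomial a c) = monomial (D a) c := by
  rw [phi_apply, aeval_monomial]
  have hprod : (a.prod fun e k => (X e.1.1 * X e.1.2 : MvPolynomial (Fin n) ℂ) ^ k)
      = monomial (D a) 1 := by
    induction a using Finsupp.induction with
    | zero => simp [D_zero, Finsupp.prod_zero_index]
    | single_add f m b hfb hm ih =>
      rw [Finsupp.prod_add_index (by intros; simp) (by intros; rw [pow_add]),
        Finsupp.prod_single_index (by simp), ih, D_add, D_single]
      have hXX : (X f.1.1 * X f.1.2 : MvPolynomial (Fin n) ℂ)
          = monomial (Finsupp.single f.1.1 1 + Finsupp.single f.1.2 1) 1 := by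
        rw [show (X f.1.1 : MvPolynomial (Fin n) ℂ)
              = monomial (Finsupp.single f.1.1 1) 1 from rfl,
          show (X f.1.2 : MvPolynomial (Fin n) ℂ)
              = monomial (Finsupp.single f.1.2 1) 1 from rfl,
          monomial_mul, one_mul]
      rw [hXX, monomial_pow, one_pow, monomial_mul, one_mul]
  rw [hprod, algebraMap_eq, C_mul_monomial, mul_one]

lemma coeff_phi (f : MvPolynomial (VarIdx n) ℂ) (d : Fin n →₀ ℕ) :
    coeff d (phi n f) = ∑ σ ∈ f.support, if D σ = d then coeff σ f else 0 := by
  conv_lhs => rw [f.as_sum]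
  rw [map_sum, MvPolynomial.coeff_sum]
  refine Finset.sum_congr rfl fun σ _ => ?_
  rw [phi_monomial, coeff_monomial]

lemma ker_span : ∀ (m : ℕ) (f : MvPolynomial (VarIdx n) ℂ), f.support.card ≤ m →
    phi n f = 0 → f ∈ Ideal.span (quadBinomials n) := by
  intro m
  induction m with
  | zero =>
    intro f hc hf
    have : f = 0 := by
      rw [← MvPolynomial.support_eq_empty, ← Finset.card_eq_zero]
      omega
    rw [this]
    exact Ideal.zero_mem _
  | succ m ih =>
    intro f hc hf
    rcases eq_or_ne f 0 with rfl | hf0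
    · exact Ideal.zero_mem _
    obtain ⟨a, ha⟩ := (MvPolynomial.support_nonempty).mpr hf0
    set S := f.support.filter (fun σ => D σ = D a) with hS
    have haS : a ∈ S := by
      rw [hS, Finset.mem_filter]
      exact ⟨ha, rfl⟩
    set corr : MvPolynomial (VarIdx n) ℂ :=
      ∑ σ ∈ S, C (coeff σ f) * (monomial σ 1 - monomial a 1) with hcorrdef
    set g := f - corr with hg
    have hsum_zero : ∑ σ ∈ S, coeff σ f = 0 := by
      have h0 := coeff_phi f (D a)
      rw [hf, MvPolynomial.coeff_zero] at h0
      rw [hS, Finset.sum_filter]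
      exact h0.symm
    have hsum_span : corr ∈ Ideal.span (quadBinomials n) := by
      rw [hcorrdef]
      refine Ideal.sum_mem _ fun σ hσ => Ideal.mul_mem_left _ _ ?_
      exact main (degsum σ) σ a le_rfl ((Finset.mem_filter.mp hσ).2)
    have hgker : phi n g = 0 := by
      rw [hg, map_sub, hf, zero_sub, neg_eq_zero, hcorrdef, map_sum]
      refine Finset.sum_eq_zero fun σ hσ => ?_
      rw [map_mul, map_sub, phi_monomial, phi_monomial, (Finset.mem_filter.mp hσ).2,
        sub_self, mul_zero]
    have hcorr : ∀ τ, coeff τ corr = (if τ ∈ S then coeff τ f else 0)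
        - (if a = τ then ∑ σ ∈ S, coeff σ f else 0) := by
      intro τ
      rw [hcorrdef, MvPolynomial.coeff_sum]
      have hterm : ∀ σ ∈ S, coeff τ (C (coeff σ f) * (monomial σ 1 - monomial a 1))
          = (if σ = τ then coeff σ f else 0) - (if a = τ then coeff σ f else 0) := by
        intro σ _
        rw [coeff_C_mul, coeff_sub, coeff_monomial, coeff_monomial]
        split_ifs <;> ring
      rw [Finset.sum_congr rfl hterm, Finset.sum_sub_distrib]
      congr 1
      · exact Finset.sum_ite_eq' S τ (fun σ => coeff σ f)
      · split_ifs <;> simp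
    have hcoeffa : coeff a g = 0 := by
      rw [hg, coeff_sub, hcorr a, if_pos haS, if_pos rfl, hsum_zero]
      ring
    have hsupp : g.support ⊆ f.support.erase a := by
      intro τ hτ
      have hτ0 : coeff τ g ≠ 0 := MvPolynomial.mem_support_iff.mp hτ
      have hτa : τ ≠ a := by
        rintro rfl
        exact hτ0 hcoeffa
      rw [Finset.mem_erase]
      refine ⟨hτa, ?_⟩
      by_contra hτf
      have hcf : coeff τ f = 0 := MvPolynomial.notMem_support_iff.mp hτf
      have hτS : τ ∉ S := fun h => hτf (Finset.mem_filter.mp h).1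
      apply hτ0
      rw [hg, coeff_sub, hcorr τ, if_neg hτS, if_neg (fun h => hτa h.symm), hcf]
      ring
    have hcard : g.support.card ≤ m := by
      have h1 : g.support.card ≤ (f.support.erase a).card := Finset.card_le_card hsupp
      have h2 := Finset.card_erase_of_mem ha
      have h3 : 1 ≤ f.support.card := Finset.card_pos.mpr ⟨a, ha⟩
      omega
    have hmem := ih g hcard hgker
    have hfg : f = g + corr := by rw [hg]; ring
    rw [hfg]
    exact Ideal.add_mem _ hmem hsum_span

end SHT

/-- The quadratic binomials generate the toric ideal `Iₙ = ker φₙ` of the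
second hypersimplex. -/
theorem secondHypersimplex_toric_ideal_generated_by_quadrics (n : ℕ) :
    Ideal.span (quadBinomials n) = RingHom.ker (phi n) := by
  apply le_antisymm
  · rw [Ideal.span_le]
    rintro g ⟨i, j, k, l, hij, hjk, hkl, (rfl | rfl)⟩ <;>
      (rw [SetLike.mem_coe, RingHom.mem_ker]
       simp only [map_sub, map_mul, SHT.phi_X_mk]
       ring)
  · intro f hf
    exact SHT.ker_span f.support.card f le_rfl (RingHom.mem_ker.mp hf)
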